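/- Quantitative Korovkin estimate via the exponential modulus of continuity: Let ℜ be a positive linear operator from C_*[0,∞) to B_*[0,∞), φ ∈ C_*[0,∞) with ‖φ‖_∞ ≤ M, and μ(t) = sup_{ξ≥0}(e^{-t} − e^{-ξ})². Then for δ = √‖ℜμ‖_∞ > 0 and all ξ ≥ 0: |ℜ(φ;ξ) − φ(ξ)| ≤ ω̂(φ,δ)|ℜ(φ₀;ξ) − 1| + 2ω̂(φ,δ) + M|ℜ(φ₀;ξ) − 1|. -/

import Mathlib

open Filter

/-- Continuous real functions on `[0,∞)` with a finite limit at infinity. -/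
def CStar (f : ℝ → ℝ) : Prop :=
  ContinuousOn f (Set.Ici 0) ∧ ∃ L : ℝ, Tendsto f atTop (nhds L)

/-- Bounded real functions on `[0,∞)` with a finite limit at infinity. -/
def BStar (f : ℝ → ℝ) : Prop :=
  (∃ C : ℝ, ∀ ξ : ℝ, 0 ≤ ξ → |f ξ| ≤ C) ∧ ∃ L : ℝ, Tendsto f atTop (nhds L)

/-- The sup norm `‖f‖_∞ = sup_{ξ ≥ 0} |f(ξ)|`. -/
noncomputable def supNorm (f : ℝ → ℝ) : ℝ := ⨆ ξ : Set.Ici (0:ℝ), |f ξ.1|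

/-- The exponential modulus of continuity
`ω̂(φ,δ) = sup{ |φ(t)-φ(ξ)| : t,ξ ≥ 0, |e^{-t}-e^{-ξ}| ≤ δ }`. -/
noncomputable def omegaHat (φ : ℝ → ℝ) (δ : ℝ) : ℝ :=
  sSup {r : ℝ | ∃ t ξ : ℝ, 0 ≤ t ∧ 0 ≤ ξ ∧
    |Real.exp (-t) - Real.exp (-ξ)| ≤ δ ∧ r = |φ t - φ ξ|}

/-- `μ(t) = sup_{ξ ≥ 0} (e^{-t} - e^{-ξ})²`. -/
noncomputable def muFn (t : ℝ) : ℝ :=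
  ⨆ ξ : Set.Ici (0:ℝ), (Real.exp (-t) - Real.exp (-ξ.1)) ^ 2

lemma CStar_const (c : ℝ) : CStar (fun _ => c) :=
  ⟨continuousOn_const, ⟨c, tendsto_const_nhds⟩⟩

lemma CStar_comb {f g : ℝ → ℝ} (a b : ℝ) (hf : CStar f) (hg : CStar g) :
    CStar (fun t => a * f t + b * g t) := by
  obtain ⟨hfc, Lf, hfl⟩ := hf
  obtain ⟨hgc, Lg, hgl⟩ := hg
  exact ⟨((continuousOn_const.mul hfc).add (continuousOn_const.mul hgc)),
    ⟨a * Lf + b * Lg, ((tendsto_const_nhds.mul hfl).add (tendsto_const_nhds.mul hgl))⟩⟩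

lemma CStar_h (c : ℝ) : CStar (fun t => (Real.exp (-t) - c) ^ 2) := by
  refine ⟨(((Real.continuous_exp.comp continuous_neg).sub continuous_const).pow 2).continuousOn, ⟨c ^ 2, ?_⟩⟩
  have h1 : Tendsto (fun t : ℝ => Real.exp (-t)) atTop (nhds 0) := by
    simpa using Real.tendsto_exp_comp_nhds_zero.mpr (tendsto_neg_atTop_atBot)
  have h2 : Tendsto (fun t : ℝ => (Real.exp (-t) - c) ^ 2) atTop (nhds ((0 - c) ^ 2)) :=
    (h1.sub tendsto_const_nhds).pow 2
  simpa using h2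

lemma muFn_eq (t : ℝ) :
    muFn t = max (Real.exp (-t) ^ 2) ((Real.exp (-t) - 1) ^ 2) := by
  set a := Real.exp (-t) with ha
  have hapos : 0 < a := Real.exp_pos _
  haveI : Nonempty (Set.Ici (0:ℝ)) := ⟨⟨0, Set.mem_Ici.mpr le_rfl⟩⟩
  have hub : ∀ ξ : Set.Ici (0:ℝ), (a - Real.exp (-ξ.1)) ^ 2 ≤ max (a ^ 2) ((a - 1) ^ 2) := by
    rintro ⟨ξ, hξ⟩
    have h1 : Real.exp (-ξ) ≤ 1 := Real.exp_le_one_iff.mpr (neg_nonpos.mpr hξ)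
    have h2 : 0 < Real.exp (-ξ) := Real.exp_pos _
    rcases le_total (Real.exp (-ξ)) a with h | h
    · exact le_max_of_le_left (by nlinarith)
    · exact le_max_of_le_right (by nlinarith)
  apply le_antisymm
  · exact ciSup_le hub
  · have hbdd : BddAbove (Set.range fun ξ : Set.Ici (0:ℝ) => (a - Real.exp (-ξ.1)) ^ 2) :=
      ⟨max (a ^ 2) ((a - 1) ^ 2), by rintro _ ⟨ξ, rfl⟩; exact hub ξ⟩
    refine max_le ?_ ?_
    · -- a^2 ≤ sup, via limit as ξ → ∞
      have hlim : Tendsto (fun ξ : ℝ => (a - Real.exp (-ξ)) ^ 2) atTop (nhds ((a - 0) ^ 2)) := by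
        have h1 : Tendsto (fun ξ : ℝ => Real.exp (-ξ)) atTop (nhds 0) := by
          simpa using Real.tendsto_exp_comp_nhds_zero.mpr (tendsto_neg_atTop_atBot)
        exact (tendsto_const_nhds.sub h1).pow 2
      have : ∀ᶠ ξ : ℝ in atTop, (a - Real.exp (-ξ)) ^ 2 ≤ muFn t := by
        filter_upwards [eventually_ge_atTop (0:ℝ)] with ξ hξ
        exact le_ciSup hbdd ⟨ξ, hξ⟩
      have := le_of_tendsto hlim this
      simpa using this
    · have := le_ciSup hbdd ⟨0, Set.mem_Ici.mpr le_rfl⟩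
      exact (by simpa using this : (a - 1) ^ 2 ≤ ⨆ ξ : Set.Ici (0:ℝ), (a - Real.exp (-ξ.1)) ^ 2)

lemma CStar_mu : CStar muFn := by
  have hmax : muFn = fun t => max (Real.exp (-t) ^ 2) ((Real.exp (-t) - 1) ^ 2) := by
    funext t; exact muFn_eq t
  rw [hmax]
  constructor
  · apply Continuous.continuousOn
    exact (((Real.continuous_exp.comp continuous_neg).pow 2).max
      (((Real.continuous_exp.comp continuous_neg).sub continuous_const).pow 2))
  · refine ⟨max (0 ^ 2) ((0 - 1) ^ 2), ?_⟩
    have h1 : Tendsto (fun t : ℝ => Real.exp (-t)) atTop (nhds 0) := by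
      simpa using Real.tendsto_exp_comp_nhds_zero.mpr (tendsto_neg_atTop_atBot)
    exact ((h1.pow 2).max ((h1.sub tendsto_const_nhds).pow 2))

lemma chain_aux (φ : ℝ → ℝ) (ω δ : ℝ) (hδ : 0 < δ) (hω : 0 ≤ ω)
    (hstep : ∀ t s : ℝ, 0 ≤ t → 0 ≤ s → |Real.exp (-t) - Real.exp (-s)| ≤ δ →
      |φ t - φ s| ≤ ω)
    (t s : ℝ) (ht : 0 ≤ t) (hs : 0 ≤ s) :
    |φ t - φ s| ≤ (1 + (Real.exp (-t) - Real.exp (-s)) ^ 2 / δ ^ 2) * ω := by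
  set x := Real.exp (-t) with hx
  set y := Real.exp (-s) with hy
  set d := |y - x| with hd
  have hd2 : (x - y) ^ 2 = d ^ 2 := by rw [hd, sq_abs]; ring
  have hdnn : 0 ≤ d := abs_nonneg _
  rcases le_or_gt d δ with hcase | hcase
  · have h1 : |φ t - φ s| ≤ ω := hstep t s ht hs (by rwa [abs_sub_comm])
    have h2 : 0 ≤ (x - y) ^ 2 / δ ^ 2 := div_nonneg (sq_nonneg _) (sq_nonneg _)
    nlinarith
  · -- d > δ
    set n := ⌈d / δ⌉₊ with hn
    have hdδ : 1 < d / δ := (one_lt_div hδ).mpr hcase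
    have hn1 : 1 ≤ n := Nat.one_le_iff_ne_zero.mpr (by
      intro h0
      have := Nat.le_ceil (d / δ)
      rw [← hn, h0] at this
      simp at this
      linarith)
    have hnR : (0:ℝ) < n := by exact_mod_cast hn1
    have hle : d / δ ≤ n := Nat.le_ceil _
    have hlt : (n:ℝ) < d / δ + 1 := Nat.ceil_lt_add_one (by linarith)
    -- points
    set p : ℕ → ℝ := fun k => x + (k:ℝ)/n * (y - x) with hp
    have hx1 : x ≤ 1 := Real.exp_le_one_iff.mpr (neg_nonpos.mpr ht)
    have hy1 : y ≤ 1 := Real.exp_le_one_iff.mpr (neg_nonpos.mpr hs)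
    have hx0 : 0 < x := Real.exp_pos _
    have hy0 : 0 < y := Real.exp_pos _
    have hpbound : ∀ k : ℕ, k ≤ n → 0 < p k ∧ p k ≤ 1 := by
      intro k hk
      have hθ0 : (0:ℝ) ≤ (k:ℝ)/n := div_nonneg (Nat.cast_nonneg _) hnR.le
      have hθ1 : (k:ℝ)/n ≤ 1 := by
        rw [div_le_one hnR]; exact_mod_cast hk
      constructor
      · rcases le_total x y with h | h
        · have : 0 ≤ (k:ℝ)/n * (y - x) := mul_nonneg hθ0 (by linarith)
          simp only [hp]; linarith
        · simp only [hp]; nlinarith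
      · rcases le_total x y with h | h
        · simp only [hp]; nlinarith
        · have : (k:ℝ)/n * (y - x) ≤ 0 := mul_nonpos_of_nonneg_of_nonpos hθ0 (by linarith)
          simp only [hp]; linarith
    set q : ℕ → ℝ := fun k => -Real.log (p k) with hq
    have hqnn : ∀ k : ℕ, k ≤ n → 0 ≤ q k := by
      intro k hk
      have := hpbound k hk
      simp only [hq]
      exact neg_nonneg.mpr (Real.log_nonpos this.1.le this.2)
    have hexpq : ∀ k : ℕ, k ≤ n → Real.exp (-(q k)) = p k := by
      intro k hk
      simp only [hq, neg_neg]
      exact Real.exp_log (hpbound k hk).1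
    have hq0 : q 0 = t := by
      simp only [hq, hp, Nat.cast_zero, zero_div, zero_mul, add_zero, hx, Real.log_exp, neg_neg]
    have hqn : q n = s := by
      have : p n = y := by
        simp only [hp]
        rw [div_self hnR.ne']
        ring
      simp only [hq, this, hy, Real.log_exp, neg_neg]
    have hstepk : ∀ k : ℕ, k + 1 ≤ n → |φ (q k) - φ (q (k+1))| ≤ ω := by
      intro k hk
      apply hstep _ _ (hqnn k (by omega)) (hqnn (k+1) hk)
      rw [hexpq k (by omega), hexpq (k+1) hk]
      have : p k - p (k+1) = -((y - x)/n) := by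
        simp only [hp, Nat.cast_add, Nat.cast_one]
        field_simp
        ring
      rw [this, abs_neg, abs_div, abs_of_pos hnR, ← hd, div_le_iff₀ hnR]
      calc d ≤ δ * (d / δ) := by rw [mul_div_cancel₀]; exact hδ.ne'
        _ ≤ δ * n := by nlinarith
    have hind : ∀ k : ℕ, k ≤ n → |φ (q 0) - φ (q k)| ≤ k * ω := by
      intro k
      induction k with
      | zero => intro _; simp
      | succ k ih =>
        intro hk
        have h1 := ih (by omega)
        have h2 := hstepk k hk
        calc |φ (q 0) - φ (q (k+1))| ≤ |φ (q 0) - φ (q k)| + |φ (q k) - φ (q (k+1))| := by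
              have := abs_sub_le (φ (q 0)) (φ (q k)) (φ (q (k+1)))
              exact this
          _ ≤ k * ω + ω := add_le_add h1 h2
          _ = (k+1 : ℕ) * ω := by push_cast; ring
    have hmain : |φ t - φ s| ≤ n * ω := by
      rw [← hq0, ← hqn]; exact hind n le_rfl
    have hfin : (n:ℝ) * ω ≤ (1 + (x - y) ^ 2 / δ ^ 2) * ω := by
      apply mul_le_mul_of_nonneg_right _ hω
      rw [hd2]
      have h1 : (n:ℝ) ≤ d/δ + 1 := hlt.le
      rw [← div_pow]
      nlinarith
    linarith


/-- Quantitative Korovkin estimate via the exponential modulus of continuity: for a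
positive linear operator `ℜ : C_*[0,∞) → B_*[0,∞)`, `‖φ‖_∞ ≤ M`, and
`δ = √‖ℜμ‖_∞ > 0`, one has for every `ξ ≥ 0`
`|ℜ(φ;ξ) - φ(ξ)| ≤ ω̂(φ,δ)|ℜ(φ₀;ξ) - 1| + 2ω̂(φ,δ) + M|ℜ(φ₀;ξ) - 1|`. -/
theorem stmt_18 (ℜ : (ℝ → ℝ) → ℝ → ℝ)
    (hmap : ∀ f, CStar f → BStar (ℜ f))
    (hlin : ∀ (f g : ℝ → ℝ) (a b : ℝ), CStar f → CStar g →
      ∀ ξ : ℝ, 0 ≤ ξ → ℜ (fun t => a * f t + b * g t) ξ = a * ℜ f ξ + b * ℜ g ξ)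
    (hpos : ∀ f g : ℝ → ℝ, CStar f → CStar g →
      (∀ t : ℝ, 0 ≤ t → f t ≤ g t) → ∀ ξ : ℝ, 0 ≤ ξ → ℜ f ξ ≤ ℜ g ξ)
    (φ : ℝ → ℝ) (hφ : CStar φ) (M : ℝ) (hM : ∀ ξ : ℝ, 0 ≤ ξ → |φ ξ| ≤ M)
    (δ : ℝ) (hδdef : δ = Real.sqrt (supNorm (ℜ muFn))) (hδ : 0 < δ) :
    ∀ ξ : ℝ, 0 ≤ ξ →
      |ℜ φ ξ - φ ξ| ≤
        omegaHat φ δ * |ℜ (fun _ => 1) ξ - 1| + 2 * omegaHat φ δ +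
          M * |ℜ (fun _ => 1) ξ - 1| := by
  intro ξ hξ
  haveI : Nonempty (Set.Ici (0:ℝ)) := ⟨⟨0, Set.mem_Ici.mpr le_rfl⟩⟩
  set ω := omegaHat φ δ with hωdef
  set S := {r : ℝ | ∃ t ξ : ℝ, 0 ≤ t ∧ 0 ≤ ξ ∧
    |Real.exp (-t) - Real.exp (-ξ)| ≤ δ ∧ r = |φ t - φ ξ|} with hS
  have hSbdd : BddAbove S := by
    refine ⟨2 * M, ?_⟩
    rintro r ⟨t, s, ht, hs, _, rfl⟩
    have := hM t ht; have := hM s hs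
    calc |φ t - φ s| ≤ |φ t| + |φ s| := abs_sub _ _
      _ ≤ 2 * M := by linarith
  have hmem0 : (0:ℝ) ∈ S := ⟨0, 0, le_rfl, le_rfl, by simp [hδ.le], by simp⟩
  have hω0 : 0 ≤ ω := le_csSup hSbdd hmem0
  have hωmem : ∀ t s : ℝ, 0 ≤ t → 0 ≤ s → |Real.exp (-t) - Real.exp (-s)| ≤ δ →
      |φ t - φ s| ≤ ω := fun t s ht hs h =>
    le_csSup hSbdd ⟨t, s, ht, hs, h, rfl⟩
  have hkey : ∀ t : ℝ, 0 ≤ t →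
      |φ t - φ ξ| ≤ (1 + (Real.exp (-t) - Real.exp (-ξ)) ^ 2 / δ ^ 2) * ω :=
    fun t ht => chain_aux φ ω δ hδ hω0 hωmem t ξ ht hξ
  set a := Real.exp (-ξ) with ha
  set h : ℝ → ℝ := fun t => (Real.exp (-t) - a) ^ 2 with hh
  have hCh : CStar h := CStar_h a
  have hC1 : CStar (fun _ : ℝ => (1:ℝ)) := CStar_const 1
  have hδ2 : (0:ℝ) < δ ^ 2 := by positivity
  -- the sandwich
  set c := φ ξ with hc
  have hsand : ∀ t : ℝ, 0 ≤ t →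
      ((-ω) * (fun _ : ℝ => (1:ℝ)) t + (-(ω / δ ^ 2)) * h t ≤ 1 * φ t + (-c) * (fun _ : ℝ => (1:ℝ)) t)
      ∧ (1 * φ t + (-c) * (fun _ : ℝ => (1:ℝ)) t ≤ ω * (fun _ : ℝ => (1:ℝ)) t + (ω / δ ^ 2) * h t) := by
    intro t ht
    have h1 := hkey t ht
    have h2 : |φ t - c| ≤ ω + ω / δ ^ 2 * h t := by
      have : (1 + (Real.exp (-t) - a) ^ 2 / δ ^ 2) * ω = ω + ω / δ ^ 2 * h t := by
        field_simp; ring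
      rw [← this]; exact h1
    rw [abs_le] at h2
    constructor <;> simp only [one_mul] <;> nlinarith [h2.1, h2.2]
  have hCψ : CStar (fun t => 1 * φ t + (-c) * (fun _ : ℝ => (1:ℝ)) t) := CStar_comb 1 (-c) hφ hC1
  have hClow : CStar (fun t => (-ω) * (fun _ : ℝ => (1:ℝ)) t + (-(ω / δ ^ 2)) * h t) :=
    CStar_comb _ _ hC1 hCh
  have hCup : CStar (fun t => ω * (fun _ : ℝ => (1:ℝ)) t + (ω / δ ^ 2) * h t) :=
    CStar_comb _ _ hC1 hCh
  have e1 := hlin φ (fun _ => 1) 1 (-c) hφ hC1 ξ hξ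
  have e2 := hlin (fun _ => 1) h ω (ω / δ ^ 2) hC1 hCh ξ hξ
  have e3 := hlin (fun _ => 1) h (-ω) (-(ω / δ ^ 2)) hC1 hCh ξ hξ
  have p1 := hpos _ _ hClow hCψ (fun t ht => (hsand t ht).1) ξ hξ
  have p2 := hpos _ _ hCψ hCup (fun t ht => (hsand t ht).2) ξ hξ
  rw [e2] at p2
  rw [e3] at p1
  rw [e1] at p1 p2
  -- ℜ h ξ ≤ δ^2
  have hCmu : CStar muFn := CStar_mu
  have hhle : ∀ t : ℝ, 0 ≤ t → h t ≤ muFn t := by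
    intro t ht
    have hbdd : BddAbove (Set.range fun s : Set.Ici (0:ℝ) =>
        (Real.exp (-t) - Real.exp (-s.1)) ^ 2) := by
      refine ⟨max (Real.exp (-t) ^ 2) ((Real.exp (-t) - 1) ^ 2), ?_⟩
      rintro _ ⟨s, rfl⟩
      have h1 : Real.exp (-s.1) ≤ 1 := Real.exp_le_one_iff.mpr (neg_nonpos.mpr s.2)
      have h2 : 0 < Real.exp (-s.1) := Real.exp_pos _
      show (Real.exp (-t) - Real.exp (-s.1)) ^ 2 ≤ _
      rcases le_total (Real.exp (-s.1)) (Real.exp (-t)) with hc | hc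
      · exact le_max_of_le_left (by nlinarith)
      · exact le_max_of_le_right (by nlinarith)
    exact le_ciSup hbdd ⟨ξ, hξ⟩
  have hRh : ℜ h ξ ≤ ℜ muFn ξ := hpos _ _ hCh hCmu hhle ξ hξ
  -- ℜ μ ξ ≤ supNorm = δ^2
  obtain ⟨⟨C, hC⟩, _⟩ := hmap muFn hCmu
  have hsup : ℜ muFn ξ ≤ supNorm (ℜ muFn) := by
    have hbdd : BddAbove (Set.range fun s : Set.Ici (0:ℝ) => |ℜ muFn s.1|) := by
      refine ⟨C, ?_⟩; rintro _ ⟨s, rfl⟩; exact hC s.1 s.2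
    calc ℜ muFn ξ ≤ |ℜ muFn ξ| := le_abs_self _
      _ ≤ supNorm (ℜ muFn) := le_ciSup hbdd ⟨ξ, hξ⟩
  have hsn : supNorm (ℜ muFn) = δ ^ 2 := by
    have hnn : 0 ≤ supNorm (ℜ muFn) := by
      by_contra hneg
      push_neg at hneg
      rw [hδdef] at hδ
      exact absurd (Real.sqrt_eq_zero_of_nonpos hneg.le) (by intro h; rw [h] at hδ; exact lt_irrefl 0 hδ)
    rw [hδdef, Real.sq_sqrt hnn]
  have hRhδ : ℜ h ξ ≤ δ ^ 2 := by rw [← hsn]; exact le_trans hRh hsup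
  have habs : |ℜ φ ξ - c * ℜ (fun _ => 1) ξ| ≤ ω * ℜ (fun _ => 1) ξ + ω := by
    rw [abs_le]
    have hmul : ω / δ ^ 2 * ℜ h ξ ≤ ω := by
      have : ω / δ ^ 2 * ℜ h ξ ≤ ω / δ ^ 2 * δ ^ 2 :=
        mul_le_mul_of_nonneg_left hRhδ (by positivity)
      rwa [div_mul_cancel₀ _ hδ2.ne'] at this
    constructor <;> nlinarith [p1, p2]
  have hcM : |c| ≤ M := hM ξ hξ
  have final : |ℜ φ ξ - φ ξ| ≤ ω * |ℜ (fun _ => 1) ξ - 1| + 2 * ω + M * |ℜ (fun _ => 1) ξ - 1| := by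
    have t1 : |ℜ φ ξ - φ ξ| ≤ |ℜ φ ξ - c * ℜ (fun _ => 1) ξ| + |c| * |ℜ (fun _ => 1) ξ - 1| := by
      have : ℜ φ ξ - φ ξ = (ℜ φ ξ - c * ℜ (fun _ => 1) ξ) + c * (ℜ (fun _ => 1) ξ - 1) := by
        rw [hc]; ring
      rw [this]
      calc |_ + _| ≤ |ℜ φ ξ - c * ℜ (fun _ => 1) ξ| + |c * (ℜ (fun _ => 1) ξ - 1)| := abs_add_le _ _
        _ = _ := by rw [abs_mul]
    have t2 : ω * ℜ (fun _ => 1) ξ ≤ ω * |ℜ (fun _ => 1) ξ - 1| + ω := by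
      have : ℜ (fun _ => 1) ξ ≤ |ℜ (fun _ => 1) ξ - 1| + 1 := by
        have := le_abs_self (ℜ (fun _ => 1) ξ - 1); linarith
      nlinarith
    have t3 : |c| * |ℜ (fun _ => 1) ξ - 1| ≤ M * |ℜ (fun _ => 1) ξ - 1| :=
      mul_le_mul_of_nonneg_right hcM (abs_nonneg _)
    linarith
  exact final
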